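/- With notation as in the dead-zone adaptive update (ψ(k) = θ̂(k) − θ, e(k) = −ψ(k−d)ᵀX(k−d) + h(k), ‖h(k)‖ ≤ ρ, η(k) the indicator of ‖e(k)‖ > 2ρ), the sum ∑_{k=d}^∞ η(k)(‖e(k)‖² − 4ρ²)/(2(1 + ‖X(k−d)‖²)) is finite. -/

import Mathlib

open Filter Topology Finset

lemma esp_norm_sq {n : ℕ} (x : EuclideanSpace ℝ (Fin n)) : ‖x‖^2 = ∑ i, x i ^ 2 := by
  rw [EuclideanSpace.norm_eq, Real.sq_sqrt (by positivity)]
  simp [sq_abs]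

lemma expand_sq {p m : ℕ} (A : Fin p → Fin m → ℝ) (x : Fin p → ℝ) (y : Fin m → ℝ) (c : ℝ) :
    ∑ i, ∑ j, (A i j + c * (x i * y j))^2
      = (∑ i, ∑ j, (A i j)^2) + 2*c*(∑ j, (∑ i, A i j * x i) * y j)
        + c^2 * ((∑ i, (x i)^2) * (∑ j, (y j)^2)) := by
  have h1 : ∀ i j, (A i j + c*(x i * y j))^2
      = (A i j)^2 + 2*c*(A i j * x i * y j) + c^2*((x i)^2 * (y j)^2) := by
    intros; ring
  simp only [h1, Finset.sum_add_distrib]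
  congr 1
  · congr 1
    rw [Finset.sum_comm, Finset.mul_sum]
    refine Finset.sum_congr rfl fun j _ => ?_
    rw [Finset.sum_mul, Finset.mul_sum]
  · rw [Finset.sum_mul_sum, Finset.mul_sum]
    refine Finset.sum_congr rfl fun i _ => ?_
    rw [Finset.mul_sum]

/-- Summability (property (25)) of the normalized dead-zone identification errors
under the dead-zone adaptive update. -/
theorem stmt_7 (m p d : ℕ) (hd : 1 ≤ d) (ρ : ℝ) (hρ : 0 < ρ)
    (θ : Matrix (Fin p) (Fin m) ℝ) (θhat ψ : ℕ → Matrix (Fin p) (Fin m) ℝ)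
    (X : ℕ → EuclideanSpace ℝ (Fin p)) (e h : ℕ → EuclideanSpace ℝ (Fin m))
    (η : ℕ → ℝ) (hη : ∀ k, η k = if ‖e k‖ > 2 * ρ then 1 else 0)
    (hh : ∀ k, ‖h k‖ ≤ ρ)
    (hψ : ∀ k, ψ k = θhat k - θ)
    (he : ∀ k ≥ d, ∀ j, e k j = -(∑ i, ψ (k - d) i j * X (k - d) i) + h k j)
    (hupdate : ∀ k ≥ d, ∀ i j, θhat k i j =
      θhat (k - d) i j + η k * (X (k - d) i * e k j) / (1 + ‖X (k - d)‖ ^ 2)) :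
    Summable (fun k =>
      η (k + d) * (‖e (k + d)‖ ^ 2 - 4 * ρ ^ 2) / (2 * (1 + ‖X k‖ ^ 2))) := by
  set V : ℕ → ℝ := fun k => ∑ i, ∑ j, (ψ k i j)^2 with hVdef
  set a : ℕ → ℝ := fun k =>
      η (k + d) * (‖e (k + d)‖ ^ 2 - 4 * ρ ^ 2) / (2 * (1 + ‖X k‖ ^ 2)) with hadef
  have hV0 : ∀ n, 0 ≤ V n := fun n =>
    Finset.sum_nonneg fun i _ => Finset.sum_nonneg fun j _ => sq_nonneg _
  have hD : ∀ n, (0:ℝ) < 1 + ‖X n‖ ^ 2 := fun n => by positivity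
  have hanonneg : ∀ n, 0 ≤ a n := by
    intro n
    simp only [hadef, hη (n + d)]
    by_cases hc : ‖e (n + d)‖ > 2 * ρ
    · rw [if_pos hc]
      have h1 : (2*ρ)^2 < ‖e (n+d)‖^2 := by
        apply pow_lt_pow_left₀ hc (by positivity)
        norm_num
      apply div_nonneg _ (by positivity)
      nlinarith
    · rw [if_neg hc]; simp
  have key : ∀ n, a n ≤ V n - V (n + d) := by
    intro n
    set k := n + d with hk
    have hkd : k - d = n := by omega
    have hkge : k ≥ d := Nat.le_add_left d n
    set c : ℝ := η k / (1 + ‖X n‖ ^ 2) with hcdef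
    have hψk : ∀ i j, ψ k i j = ψ n i j + c * (X n i * e k j) := by
      intro i j
      have hu := hupdate k hkge i j
      rw [hkd] at hu
      rw [hψ, hψ, Matrix.sub_apply, Matrix.sub_apply, hu, hcdef]
      ring
    have hrow : ∀ j, ∑ i, ψ n i j * X n i = h k j - e k j := by
      intro j
      have := he k hkge j
      rw [hkd] at this
      linarith
    have hsub : ∑ j, (h k j - e k j) * e k j
        = (∑ j, h k j * e k j) - ∑ j, (e k j)^2 := by
      rw [← Finset.sum_sub_distrib]
      exact Finset.sum_congr rfl fun j _ => by ring
    have hsum : V k = V n + 2*c*((∑ j, h k j * e k j) - ∑ j, (e k j)^2)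
        + c^2 * ((∑ i, (X n i)^2) * (∑ j, (e k j)^2)) := by
      have e0 : V k = ∑ i, ∑ j, (ψ n i j + c * (X n i * e k j))^2 := by
        simp only [hVdef]
        exact Finset.sum_congr rfl fun i _ => Finset.sum_congr rfl fun j _ => by rw [hψk]
      have hx := expand_sq (fun i j => ψ n i j) (fun i => X n i) (fun j => e k j) c
      beta_reduce at hx
      rw [e0, hx]
      simp only [hrow, hsub]
      rfl
    have hXsq : (∑ i, (X n i)^2) = ‖X n‖^2 := (esp_norm_sq _).symm
    have hesq : (∑ j, (e k j)^2) = ‖e k‖^2 := (esp_norm_sq _).symm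
    by_cases hcase : ‖e k‖ > 2 * ρ
    · have hηk : η k = 1 := by rw [hη]; exact if_pos hcase
      have hIP : ∑ j, h k j * e k j ≤ ρ * ‖e k‖ := by
        have h1 := real_inner_le_norm (h k) (e k)
        have h2 : (inner ℝ (h k) (e k) : ℝ) = ∑ j, h k j * e k j := by
          rw [PiLp.inner_apply]
          exact Finset.sum_congr rfl fun j _ => by simp [mul_comm]
        have h3 := hh k
        have h4 := norm_nonneg (e k)
        nlinarith
      have hcpos : 0 < c := by rw [hcdef, hηk]; positivity
      have hcD : c * (1 + ‖X n‖^2) = 1 := by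
        rw [hcdef, hηk]
        field_simp
      have hDne : (1 + ‖X n‖^2) ≠ 0 := (hD n).ne'
      have h5 : ∀ E : ℝ, E / (2*(1+‖X n‖^2)) = E * c / 2 := by
        intro E
        rw [hcdef, hηk, mul_one_div, div_div, mul_comm ((1:ℝ) + ‖X n‖ ^ 2) 2]
      have han : a n = (‖e k‖^2 - 4*ρ^2) * c / 2 := by
        have : a n = η k * (‖e k‖^2 - 4*ρ^2) / (2*(1+‖X n‖^2)) := rfl
        rw [this, hηk, one_mul, h5]
      rw [han, hsum, hesq, hXsq]
      set t := ‖e k‖ with ht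
      set SX := ‖X n‖^2 with hSX
      set S1 := ∑ j, h k j * e k j with hS1
      have hcSX : c * SX = 1 - c := by nlinarith
      have htpos : 0 ≤ t := norm_nonneg _
      nlinarith [mul_nonneg hcpos.le (sq_nonneg (t - 2*ρ)),
        sq_nonneg (c*t), mul_nonneg hcpos.le (sub_nonneg.2 hIP)]
    · have hηk : η k = 0 := by rw [hη]; exact if_neg hcase
      have hc0 : c = 0 := by rw [hcdef, hηk]; simp
      have han : a n = 0 := by simp [hadef, ← hk, hηk]
      rw [han, hsum, hc0]
      ring_nf
      simp
  apply summable_of_sum_range_le hanonneg (c := ∑ i ∈ Finset.range d, V i)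
  intro N
  have step1 : ∑ i ∈ Finset.range N, a i ≤ ∑ i ∈ Finset.range N, (V i - V (i + d)) :=
    Finset.sum_le_sum fun i _ => key i
  have step2 : ∑ i ∈ Finset.range N, (V i - V (i + d))
      = ∑ i ∈ Finset.range N, V i - ∑ i ∈ Finset.range N, V (i + d) := by
    rw [Finset.sum_sub_distrib]
  have step34 : ∑ i ∈ Finset.range (d + N), V i
      = ∑ i ∈ Finset.range d, V i + ∑ i ∈ Finset.range N, V (i + d) := by
    rw [Finset.sum_range_add]
    simp [add_comm]
  have step5 : ∑ i ∈ Finset.range N, V i ≤ ∑ i ∈ Finset.range (d + N), V i := by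
    apply Finset.sum_le_sum_of_subset_of_nonneg
    · exact Finset.range_subset_range.2 (Nat.le_add_left N d)
    · intro i _ _; exact hV0 i
  linarith
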